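/- Let G ≤ Sym(ℕ) be a closed subgroup and suppose h ∈ ℕ^ℕ is injective but not surjective, and h is a limit in ℕ^ℕ of a sequence (h_n) from G. Define φ : [ℝ]^ℕ → [ℝ]^ℕ by φ(x)(n) = x(h(n)). Then φ is a continuous open surjection, and for every x ∈ [ℝ]^ℕ, the sequence h_n⁻¹·x converges to φ(x) in the shift action, while the G-orbits of x and φ(x) are distinct. -/
import Mathlib

open Set

lemma open_not_countable {s : Set ℝ} (hs : IsOpen s) (hne : s.Nonempty) : ¬ s.Countable := by
  obtain ⟨x, hx⟩ := hne
  obtain ⟨ε, hε, hball⟩ := Metric.isOpen_iff.mp hs x hx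
  intro hc
  have h1 : (Ioo (x - ε) (x + ε)).Countable := hc.mono (by rwa [← Real.ball_eq_Ioo])
  have hlt : x - ε < x + ε := by linarith
  have h2 := Cardinal.mk_Ioo_real hlt
  have h3 : (Cardinal.mk ↥(Ioo (x - ε) (x + ε))) ≤ Cardinal.aleph0 := h1.le_aleph0
  rw [h2] at h3
  exact absurd h3 (not_le.mpr Cardinal.aleph0_lt_continuum)

lemma compl_countable_infinite {C : Set ℝ} (hC : C.Countable) : (Cᶜ : Set ℝ).Infinite := by
  intro hfin
  exact Cardinal.not_countable_real
    ((hC.union hfin.countable).mono (by simp [Set.union_compl_self]))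

lemma not_countable_diff {s : Set ℝ} (hs : ¬ s.Countable) {C : Set ℝ} (hC : C.Countable) :
    ¬ (s \ C).Countable := fun hd =>
  hs ((hd.union hC).mono fun x hx => by by_cases h : x ∈ C <;> simp [h, hx])

lemma diff_nonempty_of_not_countable {s : Set ℝ} (hs : ¬ s.Countable) {C : Set ℝ}
    (hC : C.Countable) : (s \ C).Nonempty := by
  rcases Set.eq_empty_or_nonempty (s \ C) with he | hne
  · exact absurd (he ▸ Set.countable_empty) (not_countable_diff hs hC)
  · exact hne

/-- Injective choice from finitely many uncountable sets. -/
lemma finset_choice (F : Finset ℕ) (W : ℕ → Set ℝ) (hW : ∀ m ∈ F, ¬ (W m).Countable) :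
    ∃ c : ℕ → ℝ, Set.InjOn c F ∧ ∀ m ∈ F, c m ∈ W m := by
  classical
  induction F using Finset.induction_on with
  | empty => exact ⟨fun _ => 0, by simp, by simp⟩
  | @insert a F ha IH =>
    obtain ⟨c, hcinj, hcW⟩ := IH fun m hm => hW m (Finset.mem_insert_of_mem hm)
    obtain ⟨v, hvW, hvc⟩ := diff_nonempty_of_not_countable
      (hW a (Finset.mem_insert_self a F)) ((F.finite_toSet.image c).countable)
    refine ⟨Function.update c a v, ?_, ?_⟩
    · intro m1 hm1 m2 hm2 heq
      simp only [Finset.coe_insert, Set.mem_insert_iff, Finset.mem_coe] at hm1 hm2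
      rcases hm1 with rfl | hm1 <;> rcases hm2 with rfl | hm2
      · rfl
      · rw [Function.update_self, Function.update_of_ne (by rintro rfl; exact ha hm2)] at heq
        exact absurd ⟨m2, hm2, heq.symm⟩ hvc
      · rw [Function.update_self, Function.update_of_ne (by rintro rfl; exact ha hm1)] at heq
        exact absurd ⟨m1, hm1, heq⟩ hvc
      · rw [Function.update_of_ne (by rintro rfl; exact ha hm1),
          Function.update_of_ne (by rintro rfl; exact ha hm2)] at heq
        exact hcinj hm1 hm2 heq
    · intro m hm
      rcases Finset.mem_insert.mp hm with rfl | hmF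
      · rw [Function.update_self]; exact hvW
      · rw [Function.update_of_ne (by rintro rfl; exact ha hmF)]; exact hcW m hmF

/-- Extension lemma: any injective `y` extends along `h` to an injective `x` with
`x ∘ h = y`, respecting finitely many open constraints. -/
lemma exists_extension (h : ℕ → ℕ) (hinj : Function.Injective h)
    (y : ℕ → ℝ) (yinj : Function.Injective y)
    (F : Finset ℕ) (W : ℕ → Set ℝ) (hW : ∀ m ∈ F, IsOpen (W m) ∧ (W m).Nonempty)
    (hyW : ∀ n, h n ∈ F → y n ∈ W (h n)) :
    ∃ x : ℕ → ℝ, Function.Injective x ∧ (∀ n, x (h n) = y n) ∧ ∀ m ∈ F, x m ∈ W m := by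
  classical
  have hC : (Set.range y).Countable := Set.countable_range y
  obtain ⟨c, hcinj, hcW⟩ := finset_choice F (fun m => W m \ Set.range y)
    (fun m hm => not_countable_diff (open_not_countable (hW m hm).1 (hW m hm).2) hC)
  have hinf : ((Set.range y ∪ c '' (F : Set ℕ))ᶜ : Set ℝ).Infinite :=
    compl_countable_infinite (hC.union ((F.finite_toSet.image c).countable))
  let e := hinf.natEmbedding
  set x : ℕ → ℝ := fun m =>
    if hm : m ∈ Set.range h then y (Function.invFun h m)
    else if m ∈ F then c m else (e m : ℝ) with hxdef
  have hxh : ∀ n, x (h n) = y n := by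
    intro n
    have hmem : h n ∈ Set.range h := ⟨n, rfl⟩
    simp only [hxdef, dif_pos hmem]
    rw [Function.leftInverse_invFun hinj n]
  have hval : ∀ m, (∃ n, h n = m ∧ x m = y n) ∨
      (m ∉ Set.range h ∧ m ∈ F ∧ x m = c m) ∨
      (m ∉ Set.range h ∧ m ∉ F ∧ x m = (e m : ℝ)) := by
    intro m
    by_cases hm : m ∈ Set.range h
    · obtain ⟨n, hn⟩ := hm
      exact Or.inl ⟨n, hn, by rw [← hn, hxh n]⟩
    · by_cases hmF : m ∈ F
      · exact Or.inr (Or.inl ⟨hm, hmF, by simp only [hxdef, dif_neg hm, if_pos hmF]⟩)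
      · exact Or.inr (Or.inr ⟨hm, hmF, by simp only [hxdef, dif_neg hm, if_neg hmF]⟩)
  have hcne : ∀ m ∈ F, c m ∉ Set.range y := fun m hm => (hcW m hm).2
  have hene : ∀ m, (e m : ℝ) ∉ Set.range y ∧ (e m : ℝ) ∉ c '' (F : Set ℕ) := by
    intro m
    have h2 := (e m).2
    simp only [Set.mem_compl_iff, Set.mem_union, not_or] at h2
    exact h2
  refine ⟨x, ?_, hxh, ?_⟩
  · intro m1 m2 heq
    rcases hval m1 with ⟨n1, hn1, hx1⟩ | ⟨hr1, hF1, hx1⟩ | ⟨hr1, hF1, hx1⟩ <;>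
      rcases hval m2 with ⟨n2, hn2, hx2⟩ | ⟨hr2, hF2, hx2⟩ | ⟨hr2, hF2, hx2⟩
    · rw [hx1, hx2] at heq; rw [← hn1, ← hn2, yinj heq]
    · exact absurd ⟨n1, by rw [← hx1, heq, hx2]⟩ (hcne m2 hF2)
    · exact absurd ⟨n1, by rw [← hx1, heq, hx2]⟩ (hene m2).1
    · exact absurd ⟨n2, by rw [← hx2, ← heq, hx1]⟩ (hcne m1 hF1)
    · rw [hx1, hx2] at heq; exact hcinj hF1 hF2 heq
    · exact absurd ⟨m1, hF1, by rw [← hx1, heq, hx2]⟩ (hene m2).2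
    · exact absurd ⟨n2, by rw [← hx2, ← heq, hx1]⟩ (hene m1).1
    · exact absurd ⟨m2, hF2, by rw [← hx2, ← heq, hx1]⟩ (hene m1).2
    · rw [hx1, hx2] at heq
      exact e.injective (Subtype.coe_injective heq)
  · intro m hm
    by_cases hr : m ∈ Set.range h
    · obtain ⟨n, rfl⟩ := hr; rw [hxh n]; exact hyW n hm
    · have hx : x m = c m := by simp only [hxdef, dif_neg hr, if_pos hm]
      rw [hx]; exact (hcW m hm).1


/-- The shift action on the space `[ℝ]^ℕ` of injective sequences. -/
def shiftP (g : Equiv.Perm ℕ) (x : {x : ℕ → ℝ // Function.Injective x}) :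
    {x : ℕ → ℝ // Function.Injective x} :=
  ⟨fun n => x.1 (g⁻¹ n), x.2.comp (g⁻¹).injective⟩

/-- The map `φ(x)(n) = x (h n)` on `[ℝ]^ℕ`, for an injection `h : ℕ → ℕ`. -/
def phiMap (h : ℕ → ℕ) (hinj : Function.Injective h)
    (x : {x : ℕ → ℝ // Function.Injective x}) : {x : ℕ → ℝ // Function.Injective x} :=
  ⟨fun n => x.1 (h n), x.2.comp hinj⟩

/-- Let `G ≤ Sym(ℕ)` be closed, `h : ℕ → ℕ` injective, non-surjective,
a pointwise limit of `(hₙ) ⊆ G`, and `φ(x)(n) = x (h n)` on `[ℝ]^ℕ`.  Then `φ` is a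
continuous open surjection, `hₙ⁻¹ · x → φ(x)` for the shift action, and the `G`-orbits
of `x` and `φ(x)` are distinct for every `x`. -/
theorem stmt16 (G : Subgroup (Equiv.Perm ℕ))
    (hGclosed : @IsClosed _
      (TopologicalSpace.induced (fun σ : Equiv.Perm ℕ => (σ : ℕ → ℕ))
        Pi.topologicalSpace)
      (G : Set (Equiv.Perm ℕ)))
    (h : ℕ → ℕ) (hinj : Function.Injective h) (hnonsurj : ¬ Function.Surjective h)
    (hk : ℕ → G)
    (hlim : Filter.Tendsto (fun k => ((hk k : Equiv.Perm ℕ) : ℕ → ℕ))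
      Filter.atTop (nhds h)) :
    Continuous (phiMap h hinj) ∧ IsOpenMap (phiMap h hinj) ∧
    Function.Surjective (phiMap h hinj) ∧
    (∀ x : {x : ℕ → ℝ // Function.Injective x},
      Filter.Tendsto (fun k => shiftP ((hk k : Equiv.Perm ℕ))⁻¹ x)
        Filter.atTop (nhds (phiMap h hinj x))) ∧
    (∀ x : {x : ℕ → ℝ // Function.Injective x},
      ∀ g ∈ G, shiftP g x ≠ phiMap h hinj x) := by
  classical
  refine ⟨?_, ?_, ?_, ?_, ?_⟩
  · -- continuity
    apply Continuous.subtype_mk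
    exact continuous_pi fun n => (continuous_apply (h n)).comp continuous_subtype_val
  · -- open map
    intro U hU
    rw [isOpen_induced_iff] at hU
    obtain ⟨V, hVopen, hVU⟩ := hU
    rw [isOpen_iff_forall_mem_open]
    rintro z ⟨x, hxU, rfl⟩
    have hxV : x.1 ∈ V := by rw [← hVU] at hxU; exact hxU
    obtain ⟨F, W, hFW, hpi⟩ := isOpen_pi_iff.mp hVopen x.1 hxV
    refine ⟨Subtype.val ⁻¹' {z : ℕ → ℝ | ∀ n, h n ∈ F → z n ∈ W (h n)}, ?_, ?_, ?_⟩
    · rintro ⟨y, yinj⟩ hy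
      simp only [Set.mem_preimage, Set.mem_setOf_eq] at hy
      obtain ⟨x', x'inj, hx'h, hx'W⟩ := exists_extension h hinj y yinj F W
        (fun m hm => ⟨(hFW m hm).1, ⟨x.1 m, (hFW m hm).2⟩⟩) hy
      refine ⟨⟨x', x'inj⟩, ?_, Subtype.ext (funext hx'h)⟩
      rw [← hVU]
      exact hpi (Set.mem_pi.mpr fun m hm => hx'W m hm)
    · apply IsOpen.preimage continuous_subtype_val
      have hset : {z : ℕ → ℝ | ∀ n, h n ∈ F → z n ∈ W (h n)} =
          Set.pi (h ⁻¹' (F : Set ℕ)) (fun n => W (h n)) := by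
        ext z; simp [Set.mem_pi]
      rw [hset]
      exact isOpen_set_pi (F.finite_toSet.preimage hinj.injOn)
        (fun n hn => (hFW (h n) hn).1)
    · simp only [Set.mem_preimage, Set.mem_setOf_eq]
      exact fun n hn => (hFW (h n) hn).2
  · -- surjectivity
    intro y
    obtain ⟨x, xinj, hxh, -⟩ := exists_extension h hinj y.1 y.2 ∅ (fun _ => Set.univ)
      (by simp) (by simp)
    exact ⟨⟨x, xinj⟩, Subtype.ext (funext hxh)⟩
  · -- convergence
    intro x
    rw [tendsto_subtype_rng, tendsto_pi_nhds]
    intro n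
    have hev : ∀ᶠ k in Filter.atTop, (hk k : Equiv.Perm ℕ) n = h n := by
      have ht := tendsto_pi_nhds.mp hlim n
      rwa [nhds_discrete ℕ, Filter.tendsto_pure] at ht
    refine Filter.Tendsto.congr' ?_ tendsto_const_nhds
    filter_upwards [hev] with k hkn
    show x.1 (h n) = x.1 ((((hk k : Equiv.Perm ℕ))⁻¹)⁻¹ n)
    rw [inv_inv, hkn]
  · -- distinct orbits
    intro x g _ hEq
    have hfn : ∀ n, x.1 (g⁻¹ n) = x.1 (h n) :=
      fun n => congrFun (congrArg Subtype.val hEq) n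
    have hg' : ∀ n, g⁻¹ n = h n := fun n => x.2 (hfn n)
    apply hnonsurj
    intro m
    obtain ⟨n, hn⟩ := (g⁻¹ : Equiv.Perm ℕ).surjective m
    exact ⟨n, by rw [← hg' n, hn]⟩
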